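/- Let P be a finite elementary abelian p-group, E a subgroup of Aut(P) whose action on P is Frobenius, and G = P⋊E. Then the conjugation action of P on the set G∖P is free (no nonidentity element of P fixes any element of G∖P under conjugation), and consequently the group cohomology H^n(P; k[G∖P]) vanishes for all n ≥ 1, where k[G∖P] denotes the k-linear span of G∖P inside kG, regarded as a kP-module via conjugation. -/

import Mathlib

open SemidirectProduct

/-- The complement `G ∖ P` of (the canonical copy of) `P` inside `G = P ⋊[φ] E`. -/
def SdComplement {P E : Type*} [Group P] [Group E] (φ : E →* MulAut P) : Type _ :=
  {g : P ⋊[φ] E // g.right ≠ 1}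

/-- `P` acts on `G ∖ P` by conjugation. -/
instance SdComplement.instSMul {P E : Type*} [Group P] [Group E] (φ : E →* MulAut P) :
    SMul P (SdComplement φ) :=
  ⟨fun p g => ⟨inl p * g.1 * (inl p)⁻¹, by
    simpa [SemidirectProduct.mul_right, SemidirectProduct.inv_right,
      SemidirectProduct.right_inl] using g.2⟩⟩

@[simp] lemma SdComplement.smul_coe {P E : Type*} [Group P] [Group E] {φ : E →* MulAut P}
    (p : P) (g : SdComplement φ) :
    (p • g).1 = inl p * g.1 * (inl p)⁻¹ := rfl

/-- The conjugation action of `P` on `G ∖ P` is a group action. -/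
instance SdComplement.mulAction {P E : Type*} [Group P] [Group E] (φ : E →* MulAut P) :
    MulAction P (SdComplement φ) where
  one_smul g := Subtype.ext (by simp)
  mul_smul p q g := Subtype.ext (by simp [map_mul, mul_inv_rev, mul_assoc])

open CategoryTheory

section
variable {G : Type} [Group G] {S : Type} [MulAction G S]

noncomputable def orbRep (s : S) : S :=
  Quotient.out (Quotient.mk (MulAction.orbitRel G S) s)

lemma exists_gamma (s : S) : ∃ g : G, g • orbRep (G := G) s = s := by
  have h : (Quotient.mk (MulAction.orbitRel G S) s).out ∈ MulAction.orbit G s :=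
    Quotient.mk_out (s := MulAction.orbitRel G S) s
  obtain ⟨g, hg⟩ := h
  exact ⟨g⁻¹, by rw [orbRep, ← hg, ← mul_smul, inv_mul_cancel, one_smul]⟩

noncomputable def gamma (s : S) : G := Classical.choose (exists_gamma (G := G) s)

lemma gamma_spec (s : S) : gamma (G := G) s • orbRep (G := G) s = s :=
  Classical.choose_spec (exists_gamma (G := G) s)

lemma orbRep_smul (g : G) (s : S) : orbRep (G := G) (g • s) = orbRep (G := G) s := by
  unfold orbRep
  congr 1
  exact Quotient.sound ⟨g, rfl⟩

variable (hfree : ∀ (g : G) (s : S), g • s = s → g = 1)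

include hfree in
lemma gamma_smul (g : G) (s : S) : gamma (G := G) (g • s) = g * gamma (G := G) s := by
  have h1 := gamma_spec (G := G) (g • s)
  rw [orbRep_smul] at h1
  have h2 : (g * gamma (G := G) s) • orbRep (G := G) s = g • s := by
    rw [mul_smul, gamma_spec]
  have h3 : ((g * gamma (G := G) s)⁻¹ * gamma (G := G) (g • s)) • orbRep (G := G) s
      = orbRep (G := G) s := by
    rw [mul_smul, h1.trans h2.symm, ← mul_smul, inv_mul_cancel, one_smul]
  have := hfree _ _ h3
  rw [inv_mul_eq_one] at this
  exact this.symm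

lemma gamma_inv_smul (s : S) : (gamma (G := G) s)⁻¹ • s = orbRep (G := G) s := by
  have h := gamma_spec (G := G) s
  calc (gamma (G := G) s)⁻¹ • s = (gamma (G := G) s)⁻¹ • (gamma (G := G) s • orbRep (G := G) s) :=
        by rw [h]
    _ = orbRep (G := G) s := by rw [← mul_smul, inv_mul_cancel, one_smul]

end

lemma contractNth_zero_cons {n : ℕ} {α : Type*} (op : α → α → α) (a : α) (g : Fin (n+1) → α) :
    Fin.contractNth 0 op (Fin.cons a g) = Fin.cons (op a (g 0)) (Fin.tail g) := by
  funext j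
  refine Fin.cases ?_ (fun i => ?_) j
  · rw [Fin.contractNth_apply_of_eq _ _ _ _ (by simp), Fin.cons_zero]
    simp
  · rw [Fin.contractNth_apply_of_gt _ _ _ _ (by simp), Fin.cons_succ, Fin.cons_succ]
    rfl

lemma contractNth_succ_cons {n : ℕ} {α : Type*} (op : α → α → α) (j : Fin (n+1)) (a : α)
    (g : Fin (n+1) → α) :
    Fin.contractNth j.succ op (Fin.cons a g) = Fin.cons a (Fin.contractNth j op g) := by
  funext i
  refine Fin.cases ?_ (fun i => ?_) i
  · rw [Fin.contractNth_apply_of_lt _ _ _ _ (by simp), Fin.castSucc_zero, Fin.cons_zero,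
      Fin.cons_zero]
  · rw [Fin.cons_succ]
    rcases lt_trichotomy (i : ℕ) (j : ℕ) with h | h | h
    · rw [Fin.contractNth_apply_of_lt _ _ _ _ (by simpa), Fin.contractNth_apply_of_lt _ _ _ _ h,
        ← Fin.succ_castSucc, Fin.cons_succ]
    · rw [Fin.contractNth_apply_of_eq _ _ _ _ (by simpa), Fin.contractNth_apply_of_eq _ _ _ _ h,
        ← Fin.succ_castSucc, Fin.cons_succ, Fin.cons_succ]
    · rw [Fin.contractNth_apply_of_gt _ _ _ _ (by simpa), Fin.contractNth_apply_of_gt _ _ _ _ h,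
        Fin.cons_succ]

open groupCohomology CategoryTheory.Limits

lemma d_eval {k : Type} [CommRing k] {G : Type} [Group G] {S : Type} [MulAction G S] [Finite S]
    (n : ℕ) (f : (Fin n → G) → MonoidAlgebra k S) (g : Fin (n + 1) → G) :
    @Eq (MonoidAlgebra k S) ((inhomogeneousCochains.d (Rep.of (Representation.ofMulAction k G S)) n).hom f g)
      (MonoidAlgebra.ofCoeff (Finsupp.equivFunOnFinite.symm (fun t => (f (fun i => g i.succ)).coeff ((g 0)⁻¹ • t) +
        ∑ j : Fin (n + 1), (-1 : k) ^ ((j : ℕ) + 1) * (f (Fin.contractNth j (· * ·) g)).coeff t))) := by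
  refine MonoidAlgebra.ext (Finsupp.ext fun t => ?_)
  rw [inhomogeneousCochains.d_hom_apply, MonoidAlgebra.coeff_add, Finsupp.add_apply,
    MonoidAlgebra.coeff_sum, Finsupp.finset_sum_apply, MonoidAlgebra.coeff_ofCoeff,
    Finsupp.coe_equivFunOnFinite_symm]
  congr 1
  exact Representation.coeff_ofMulAction (g 0) (f fun i => g i.succ) t

lemma d_surj_of_free {k : Type} [CommRing k] {G : Type} [Group G] {S : Type} [MulAction G S]
    [Finite S] (hfree : ∀ (g : G) (s : S), g • s = s → g = 1) (m : ℕ)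
    (f : (Fin (m + 1) → G) → MonoidAlgebra k S)
    (hf : (inhomogeneousCochains.d (Rep.of (Representation.ofMulAction k G S)) (m + 1)).hom f = 0) :
    ∃ y : (Fin m → G) → MonoidAlgebra k S,
      (inhomogeneousCochains.d (Rep.of (Representation.ofMulAction k G S)) m).hom y = f := by
  refine ⟨fun g => MonoidAlgebra.ofCoeff (Finsupp.equivFunOnFinite.symm
      (fun s => (f (Fin.cons (gamma (G := G) s)⁻¹ g)).coeff ((gamma (G := G) s)⁻¹ • s))), ?_⟩
  funext g
  show _ = f g
  rw [d_eval]
  refine MonoidAlgebra.ext (Finsupp.ext fun s => ?_)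
  rw [MonoidAlgebra.coeff_ofCoeff, Finsupp.coe_equivFunOnFinite_symm]
  have key0 : @Eq (MonoidAlgebra k S) ((inhomogeneousCochains.d
      (Rep.of (Representation.ofMulAction k G S)) (m + 1)).hom f (Fin.cons (gamma (G := G) s)⁻¹ g)) 0 := by
    rw [hf]; rfl
  have key := DFunLike.congr_fun (congrArg MonoidAlgebra.coeff ((d_eval (m + 1) f
    (Fin.cons (gamma (G := G) s)⁻¹ g)).symm.trans key0)) ((gamma (G := G) s)⁻¹ • s)
  rw [MonoidAlgebra.coeff_ofCoeff, Finsupp.coe_equivFunOnFinite_symm,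
    MonoidAlgebra.coeff_zero, Finsupp.zero_apply] at key
  have h1 : (((g 0)⁻¹ * gamma (G := G) s)⁻¹ : G) = (gamma (G := G) s)⁻¹ * g 0 := by group
  have h2 : ((gamma (G := G) s)⁻¹ * g 0) • ((g 0)⁻¹ • s) = (gamma (G := G) s)⁻¹ • s := by
    rw [smul_smul, mul_inv_cancel_right]
  simp only [Fin.sum_univ_succ, Fin.cons_zero, Fin.cons_succ, contractNth_zero_cons,
    contractNth_succ_cons, Fin.val_succ, Fin.val_zero, Fin.tail_def, inv_inv, smul_inv_smul,
    Finsupp.coe_equivFunOnFinite_symm, MonoidAlgebra.coeff_ofCoeff,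
    gamma_smul hfree, h1, h2, pow_succ, pow_zero, one_mul, mul_one,
    mul_neg_one, neg_mul, mul_neg, neg_neg, Finset.sum_neg_distrib] at key ⊢
  linear_combination -key

lemma subsingleton_groupCohomology_of_free
    {k : Type} [CommRing k] {G : Type} [Group G] {S : Type} [MulAction G S] [Finite S]
    (hfree : ∀ (g : G) (s : S), g • s = s → g = 1) (n : ℕ) (hn : 1 ≤ n) :
    Subsingleton (groupCohomology (Rep.of (Representation.ofMulAction k G S)) n) := by
  obtain ⟨m, rfl⟩ : ∃ m, n = m + 1 := ⟨n - 1, (Nat.succ_pred_eq_of_pos hn).symm⟩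
  set A : Rep k G := Rep.of (Representation.ofMulAction k G S) with hA
  have hex : (inhomogeneousCochains A).ExactAt (m + 1) := by
    rw [HomologicalComplex.exactAt_iff' _ m (m + 1) (m + 2)
      (by simp) (by simp)]
    rw [ShortComplex.moduleCat_exact_iff]
    intro f hf
    obtain ⟨y, hy⟩ := d_surj_of_free (k := k) hfree m f
      (by have h2 : (inhomogeneousCochains A).d (m + 1) (m + 2) f = 0 := hf
          rwa [inhomogeneousCochains.d_def] at h2)
    refine ⟨y, ?_⟩
    show (inhomogeneousCochains A).d m (m + 1) y = f
    rw [inhomogeneousCochains.d_def]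
    exact hy
  have hz : IsZero ((inhomogeneousCochains A).homology (m + 1)) :=
    (HomologicalComplex.exactAt_iff_isZero_homology _ _).1 hex
  have h0 : (𝟙 ((inhomogeneousCochains A).homology (m + 1))) = 0 := hz.eq_of_src _ _
  constructor
  intro x y
  have : ∀ z : (inhomogeneousCochains A).homology (m + 1), z = 0 := by
    intro z
    calc z = (𝟙 ((inhomogeneousCochains A).homology (m + 1))) z := rfl
      _ = 0 := by rw [h0]; rfl
  exact (this x).trans (this y).symm

/-- Let `P` be a finite elementary abelian `p`-group, `E ≤ Aut(P)` with
Frobenius action on `P`, and `G = P ⋊ E`.  Then the conjugation action of `P` on `G ∖ P` is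
free, and consequently the group cohomology `Hⁿ(P; k[G ∖ P])` vanishes for all `n ≥ 1`,
where `k[G ∖ P]` is the `k`-linear span of `G ∖ P` in `kG`, a `kP`-module via conjugation. -/
theorem free_conj_action_and_cohomology_vanishing
    (p : ℕ) (hp : p.Prime)
    (k : Type) [Field k] [CharP k p] [IsAlgClosed k]
    (P : Type) [CommGroup P] [Finite P] (hP : ∀ g : P, g ^ p = 1)
    (E : Subgroup (MulAut P))
    (hfrob : ∀ e : E, e ≠ 1 → ∀ x : P, (e : MulAut P) x = x → x = 1) :
    (∀ x : P, x ≠ 1 → ∀ g : SdComplement E.subtype, x • g ≠ g) ∧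
    ∀ n : ℕ, 1 ≤ n →
      Subsingleton
        (groupCohomology
          (Rep.of (Representation.ofMulAction k P (SdComplement E.subtype))) n) := by
  haveI : Finite (MulAut P) := Finite.of_injective
    (fun e => (e : P → P)) (fun a b h => by
      ext x; exact congrFun h x)
  haveI : Finite (P ⋊[E.subtype] E) := Finite.of_injective
    (fun g => (g.left, g.right)) (fun a b h => by
      cases a; cases b
      simpa [SemidirectProduct.ext_iff, Prod.ext_iff] using h)
  haveI : Finite (SdComplement E.subtype) :=
    inferInstanceAs (Finite {g : P ⋊[E.subtype] E // g.right ≠ 1})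
  have hfree : ∀ (x : P) (g : SdComplement E.subtype), x • g = g → x = 1 := by
    intro x g hg
    have h := congrArg (fun z : SdComplement E.subtype => z.1.left) hg
    simp only [SdComplement.smul_coe] at h
    have h' : x * g.1.left * (E.subtype g.1.right) x⁻¹ = g.1.left := by
      simpa [SemidirectProduct.mul_left, SemidirectProduct.inv_left,
        SemidirectProduct.inv_right, SemidirectProduct.left_inl,
        SemidirectProduct.right_inl, SemidirectProduct.mul_right] using h
    have h3 : x * g.1.left * x⁻¹ = g.1.left := by
      rw [mul_comm x g.1.left, mul_inv_cancel_right]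
    have h2 : x * g.1.left * (E.subtype g.1.right) x⁻¹ = x * g.1.left * x⁻¹ :=
      h'.trans h3.symm
    have hx : (E.subtype g.1.right) x⁻¹ = x⁻¹ := mul_left_cancel h2
    have hx1 : x⁻¹ = 1 := hfrob g.1.right g.2 x⁻¹ hx
    exact inv_eq_one.mp hx1
  refine ⟨fun x hx g hcon => hx (hfree x g hcon), ?_⟩
  intro n hn
  exact subsingleton_groupCohomology_of_free hfree n hn
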